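/- A thin chamber complex Δ of rank n contains a zigzag of length n+1 if and only if Δ is the n-simplex α_n (i.e., its vertex set has n+1 elements and every n-element subset of vertices is a facet). -/

import Mathlib

open scoped Classical

variable {V : Type*}

/-- `C` is a facet (maximal face) of a pure rank-`n` complex: a face with `n` vertices. -/
def IsFacet (n : ℕ) (faces : Finset V → Prop) (C : Finset V) : Prop :=
  faces C ∧ C.card = n

/-- `faces` describes a thin pure simplicial complex of rank `n` over the vertex set `V`:
it is downward closed, every singleton is a face, every face has at most `n` vertices and is
contained in a facet, and every ridge (face with `n - 1` vertices) lies in exactly two facets. -/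
def IsThinComplex (n : ℕ) (faces : Finset V → Prop) : Prop :=
  (∀ v : V, faces {v}) ∧
  (∀ ⦃X Y : Finset V⦄, faces X → Y ⊆ X → faces Y) ∧
  (∀ ⦃X : Finset V⦄, faces X → X.card ≤ n) ∧
  (∀ ⦃X : Finset V⦄, faces X → ∃ C : Finset V, IsFacet n faces C ∧ X ⊆ C) ∧
  (∀ ⦃R : Finset V⦄, faces R → R.card = n - 1 →
    {C : Finset V | IsFacet n faces C ∧ R ⊆ C}.ncard = 2)

/-- A flag, encoded by the ordered vertex sequence `x_0, …, x_{n-1}` determining it: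
the chain of faces is `{x_0} ⊂ {x_0,x_1} ⊂ … ⊂ {x_0,…,x_{n-1}}`, the top being a facet. -/
def IsFlag (n : ℕ) (faces : Finset V → Prop) (F : List V) : Prop :=
  F.length = n ∧ F.Nodup ∧ faces F.toFinset

/-- `G = T(F)` for the zigzag operator `T = σ_{n-1} ∘ ⋯ ∘ σ_0`: if `F` is determined by the
vertex sequence `x_0, x_1, …, x_{n-1}`, then `T(F)` is determined by `x_1, …, x_{n-1}, y` with
`y ≠ x_0`. -/
def TStep (n : ℕ) (faces : Finset V → Prop) (F G : List V) : Prop :=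
  IsFlag n faces F ∧ IsFlag n faces G ∧
    ∃ y : V, G = F.tail ++ [y] ∧ F.head? ≠ some y

/-- A zigzag of length `l`: the orbit `F, T F, T² F, …` of the operator `T` on flags, recorded
as the sequence `i ↦ Tⁱ F`; it is `l`-periodic with `l` the minimal period. -/
def IsZigzag (n : ℕ) (faces : Finset V → Prop) (l : ℕ) (F : ℕ → List V) : Prop :=
  0 < l ∧ (∀ i : ℕ, TStep n faces (F i) (F (i + 1))) ∧ (∀ i : ℕ, F (i + l) = F i) ∧
    ∀ m : ℕ, 0 < m → (∀ i : ℕ, F (i + m) = F i) → l ≤ m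

/-- The set of flags of a zigzag together with those of its reverse zigzag; two zigzags are
identified (a zigzag is identified with its reverse, and with its cyclic shifts) exactly when
these sets coincide. -/
def ZigzagClass (F : ℕ → List V) : Set (List V) :=
  Set.range F ∪ Set.range fun i => (F i).reverse

/-- `G = σ_i(F)`: the flag `G` has the same `j`-faces as `F` for all `j ≠ i`, and a different
`i`-face (the `j`-face of the flag with vertex sequence `F` is `(F.take (j+1)).toFinset`). -/
def SigmaStep (n : ℕ) (faces : Finset V → Prop) (i : ℕ) (F G : List V) : Prop :=
  IsFlag n faces F ∧ IsFlag n faces G ∧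
    (∀ j : ℕ, j < n → j ≠ i → (G.take (j + 1)).toFinset = (F.take (j + 1)).toFinset) ∧
    (G.take (i + 1)).toFinset ≠ (F.take (i + 1)).toFinset

/-- `G = T_δ(F)` where `T_δ = σ_{δ(n-1)} ∘ ⋯ ∘ σ_{δ(0)}`. -/
def TDeltaStep (n : ℕ) (faces : Finset V → Prop) (δ : Equiv.Perm (Fin n))
    (F G : List V) : Prop :=
  ∃ c : ℕ → List V, c 0 = F ∧ c n = G ∧
    ∀ i : Fin n, SigmaStep n faces (δ i) (c i) (c (i + 1))

/-- A generalized zigzag (δ-zigzag) of length `l`: the orbit of `T_δ` on flags. -/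
def IsGenZigzag (n : ℕ) (faces : Finset V → Prop) (δ : Equiv.Perm (Fin n)) (l : ℕ)
    (F : ℕ → List V) : Prop :=
  0 < l ∧ (∀ i : ℕ, TDeltaStep n faces δ (F i) (F (i + 1))) ∧ (∀ i : ℕ, F (i + l) = F i) ∧
    ∀ m : ℕ, 0 < m → (∀ i : ℕ, F (i + m) = F i) → l ≤ m

/-- Adjacency in the facet-adjacency graph `Γ_{n-1}(Δ)`: two distinct facets meeting in a ridge. -/
def FacetAdj (n : ℕ) (faces : Finset V → Prop) (C D : Finset V) : Prop :=
  IsFacet n faces C ∧ IsFacet n faces D ∧ C ≠ D ∧ (C ∩ D).card = n - 1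

/-- `p 0, p 1, …, p m` is a path in the facet-adjacency graph. -/
def IsFacetPath (n : ℕ) (faces : Finset V → Prop) (m : ℕ) (p : ℕ → Finset V) : Prop :=
  ∀ i : ℕ, i < m → FacetAdj n faces (p i) (p (i + 1))

/-- The path distance in the facet-adjacency graph `Γ_{n-1}(Δ)`. -/
noncomputable def facetDist (n : ℕ) (faces : Finset V → Prop) (X Y : Finset V) : ℕ :=
  sInf {m : ℕ | ∃ p : ℕ → Finset V, p 0 = X ∧ p m = Y ∧ IsFacetPath n faces m p}

/-- The complex is a chamber complex: the facet-adjacency graph is connected. -/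
def ChamberConnected (n : ℕ) (faces : Finset V → Prop) : Prop :=
  ∀ C D : Finset V, IsFacet n faces C → IsFacet n faces D →
    ∃ (m : ℕ) (p : ℕ → Finset V), p 0 = C ∧ p m = D ∧ IsFacetPath n faces m p

-- helper: cancellation of addition under mod
lemma addmod_cancel {n i a b : ℕ} (h : (i + a) % n = (i + b) % n)
    (ha : a < n) (hb : b < n) : a = b := by
  have h2 : a ≡ b [MOD n] := Nat.ModEq.add_left_cancel' i h
  have h3 : a % n = b % n := h2
  rwa [Nat.mod_eq_of_lt ha, Nat.mod_eq_of_lt hb] at h3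

-- a set of ncard 2 containing two distinct elements is that pair
lemma pair_of_ncard_two {α : Type*} {s : Set α} {A B : α} (h2 : s.ncard = 2)
    (hA : A ∈ s) (hB : B ∈ s) (hAB : A ≠ B) : s = {A, B} := by
  have hfin : s.Finite := Set.finite_of_ncard_ne_zero (by omega)
  have hsub : ({A, B} : Set α) ⊆ s := Set.insert_subset hA (Set.singleton_subset_iff.2 hB)
  exact (Set.eq_of_subset_of_ncard_le hsub (by rw [h2, Set.ncard_pair hAB]) hfin).symm

section Reverse
variable [Fintype V]

lemma simplex_zigzag (n : ℕ) (hn : 0 < n) (faces : Finset V → Prop)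
    (hcard : Fintype.card V = n + 1)
    (hfac : ∀ X : Finset V, X.card = n → IsFacet n faces X) :
    ∃ F : ℕ → List V, IsZigzag n faces (n + 1) F := by
  have e := Fintype.equivFinOfCardEq hcard
  set x : ℕ → V := fun i => e.symm ⟨i % (n+1), Nat.mod_lt _ (by omega)⟩ with hxdef
  have hxinj : ∀ a b : ℕ, x a = x b → a % (n+1) = b % (n+1) := by
    intro a b h
    have h2 := e.symm.injective h
    exact congrArg Fin.val h2
  have hxeq : ∀ a b : ℕ, a % (n+1) = b % (n+1) → x a = x b := by
    intro a b h; simp only [hxdef]; congr 1; exact Fin.ext h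
  set F : ℕ → List V := fun i => (List.range n).map (fun j => x (i + j)) with hFdef
  have hlen : ∀ i, (F i).length = n := by intro i; simp [hFdef]
  have hnd : ∀ i, (F i).Nodup := by
    intro i
    refine List.Nodup.map_on ?_ (List.nodup_range (n := n))
    intro a ha b hb h
    rw [List.mem_range] at ha hb
    exact addmod_cancel (hxinj _ _ h) (by omega) (by omega)
  have hflag : ∀ i, IsFlag n faces (F i) := by
    intro i
    refine ⟨hlen i, hnd i, ?_⟩
    have hc : (F i).toFinset.card = n := by
      rw [List.toFinset_card_of_nodup (hnd i), hlen i]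
    exact (hfac _ hc).1
  have key : ∀ i, F i ++ [x (i+n)] = x i :: F (i+1) := by
    intro i
    have h1 : F i ++ [x (i+n)] = (List.range (n+1)).map (fun j => x (i+j)) := by
      rw [List.range_succ, List.map_append]; simp [hFdef]
    have hfun : ((fun j => x (i + j)) ∘ Nat.succ) = (fun j => x (i + 1 + j)) := by
      funext j; simp only [Function.comp]; congr 1; omega
    have h2 : x i :: F (i+1) = (List.range (n+1)).map (fun j => x (i+j)) := by
      rw [List.range_succ_eq_map, List.map_cons, List.map_map, hfun]
      simp [hFdef]
    rw [h1, h2]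
  have hcons : ∀ i, ∃ t, F i = x i :: t ∧ F (i+1) = t ++ [x (i+n)] := by
    intro i
    cases hF : F i with
    | nil => exfalso; have := hlen i; rw [hF] at this; simp at this; omega
    | cons a t =>
      have hk := key i
      rw [hF] at hk
      simp only [List.cons_append, List.cons.injEq] at hk
      exact ⟨t, by rw [hk.1], hk.2.symm⟩
  refine ⟨F, Nat.succ_pos n, ?_, ?_, ?_⟩
  · intro i
    obtain ⟨t, hFi, hFi1⟩ := hcons i
    refine ⟨hflag i, hflag (i+1), x (i+n), by rw [hFi1, hFi]; rfl, ?_⟩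
    rw [hFi]
    simp only [List.head?_cons, ne_eq, Option.some.injEq]
    intro h
    have := addmod_cancel (a := 0) (b := n)
      (by simpa using hxinj i (i+n) h) (by omega) (by omega)
    omega
  · intro i
    simp only [hFdef]
    refine List.map_congr_left ?_
    intro j _
    exact hxeq _ _ (by rw [show i + (n+1) + j = (i + j) + (n+1) by omega, Nat.add_mod_right])
  · intro m hm hper
    have h1 := congrArg List.head? (hper 0)
    simp only [Nat.zero_add] at h1
    obtain ⟨t0, hF0, _⟩ := hcons 0
    obtain ⟨tm, hFm, _⟩ := hcons m
    rw [hF0, hFm] at h1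
    simp only [List.head?_cons, Option.some.injEq] at h1
    have h2 := hxinj _ _ h1
    rw [Nat.zero_mod] at h2
    have := Nat.le_of_dvd hm (Nat.dvd_of_mod_eq_zero h2)
    omega

end Reverse

section Forward
variable [Fintype V]

lemma zigzag_simplex (n : ℕ) (hn : 0 < n) (faces : Finset V → Prop)
    (hΔ : IsThinComplex n faces) (hconn : ChamberConnected n faces)
    (F : ℕ → List V) (hz : IsZigzag n faces (n + 1) F) :
    Fintype.card V = n + 1 ∧ ∀ X : Finset V, X.card = n → IsFacet n faces X := by
  obtain ⟨-, hstep, hperF, -⟩ := hz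
  choose y' hy hylast using fun i => (hstep i).2.2
  have hlen : ∀ i, (F i).length = n := fun i => (hstep i).1.1
  have hnd : ∀ i, (F i).Nodup := fun i => (hstep i).1.2.1
  have hfaces : ∀ i, faces (F i).toFinset := fun i => (hstep i).1.2.2
  set x : ℕ → V := fun i => if h : i < n then (F 0).getD i (y' 0) else y' (i - n) with hxdef
  -- coordinates of the flags
  have hx : ∀ i j, j < n → (F i)[j]? = some (x (i + j)) := by
    intro i
    induction i with
    | zero =>
      intro j hj
      have hjl : j < (F 0).length := by rw [hlen 0]; exact hj
      rw [List.getElem?_eq_getElem hjl]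
      simp only [Nat.zero_add, hxdef, dif_pos hj]
      rw [List.getD_eq_getElem _ _ hjl]
    | succ i ih =>
      intro j hj
      rw [hy i]
      have htl : (F i).tail.length = n - 1 := by rw [List.length_tail, hlen i]
      rcases lt_or_ge j (n - 1) with hj1 | hj1
      · rw [List.getElem?_append_left (by rw [htl]; exact hj1), List.getElem?_tail]
        rw [show i + 1 + j = i + (j + 1) by omega]
        exact ih (j+1) (by omega)
      · have hjn : j = n - 1 := by omega
        rw [List.getElem?_append_right (by rw [htl]; omega), htl]
        have : j - (n-1) = 0 := by omega
        rw [this]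
        have hix : i + 1 + j = i + n := by omega
        rw [hix]
        simp only [List.getElem?_cons_zero, Option.some.injEq, hxdef,
          dif_neg (show ¬ i + n < n by omega)]
        congr 1
        omega
  have hhead : ∀ i, (F i).head? = some (x i) := by
    intro i
    rw [List.head?_eq_getElem?]
    have := hx i 0 hn
    rwa [Nat.add_zero] at this
  have hxne : ∀ i, x i ≠ x (i + n) := by
    intro i h
    apply hylast i
    rw [hhead i, h]
    congr 1
    simp only [hxdef, dif_neg (show ¬ i + n < n by omega)]
    congr 1
    omega
  have hper : ∀ i, x (i + (n+1)) = x i := by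
    intro i
    have h1 := hx (i + (n+1)) 0 hn
    have h2 := hx i 0 hn
    rw [hperF i] at h1
    rw [h1] at h2
    simpa using h2
  -- windows are injective
  have hwin : ∀ i j k, j < n → k < n → x (i + j) = x (i + k) → j = k := by
    intro i j k hj hk h
    refine (List.getElem?_inj (l := F i) (by rw [hlen i]; exact hj) (hnd i)).1 ?_
    rw [hx i j hj, hx i k hk, h]
  -- injectivity on [0, n]
  have hinj : ∀ a b, a < n + 1 → b < n + 1 → x a = x b → a = b := by
    have haux : ∀ a b, a ≤ b → b < n + 1 → x a = x b → a = b := by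
      intro a b hab hb h
      rcases lt_or_ge b n with hbn | hbn
      · exact hwin 0 a b (by omega) hbn (by simpa using h)
      · have hbn' : b = n := by omega
        rcases Nat.eq_or_lt_of_le hab with h' | han
        · exact h'
        rcases Nat.eq_zero_or_pos a with rfl | ha
        · exact absurd (by rw [hbn'] at h; simpa using h) (hxne 0)
        · exfalso
          have := hwin 1 (a - 1) (n - 1) (by omega) (by omega)
            (by rw [show 1 + (a-1) = a by omega, show 1 + (n-1) = n by omega, ← hbn']
                exact h)
          omega
    intro a b ha hb h
    rcases le_total a b with hab | hab
    · exact haux a b hab hb h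
    · exact (haux b a hab ha h.symm).symm
  -- periodic reduction
  have hmod : ∀ i, x i = x (i % (n+1)) := by
    intro i
    induction i using Nat.strong_induction_on with
    | _ i ih =>
      rcases lt_or_ge i (n+1) with h | h
      · rw [Nat.mod_eq_of_lt h]
      · have h1 : i = (i - (n+1)) + (n+1) := by omega
        calc x i = x ((i - (n+1)) + (n+1)) := by rw [← h1]
          _ = x (i - (n+1)) := hper _
          _ = x ((i - (n+1)) % (n+1)) := ih _ (by omega)
          _ = x (i % (n+1)) := by
              congr 1
              conv_rhs => rw [h1]
              rw [Nat.add_mod_right]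
  set S : Finset V := (Finset.range (n+1)).image x with hSdef
  have hScard : S.card = n + 1 := by
    rw [hSdef, Finset.card_image_of_injOn, Finset.card_range]
    intro a ha b hb h
    exact hinj a b (Finset.mem_range.1 ha) (Finset.mem_range.1 hb) h
  have hmemS : ∀ i, x i ∈ S := by
    intro i
    rw [hmod i, hSdef]
    exact Finset.mem_image_of_mem x (Finset.mem_range.2 (Nat.mod_lt _ (by omega)))
  -- the window finsets
  have hWF : ∀ i, (F i).toFinset = (Finset.range n).image (fun j => x (i + j)) := by
    intro i
    ext v
    simp only [List.mem_toFinset, Finset.mem_image, Finset.mem_range, List.mem_iff_getElem?]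
    constructor
    · rintro ⟨j, hj⟩
      have hjn : j < n := by
        by_contra hc
        rw [List.getElem?_eq_none (by rw [hlen i]; omega)] at hj
        exact Option.some_ne_none _ hj.symm
      refine ⟨j, hjn, ?_⟩
      have := hx i j hjn
      rw [hj] at this
      exact (Option.some.injEq _ _ ▸ this).symm
    · rintro ⟨j, hjn, rfl⟩
      exact ⟨j, hx i j hjn⟩
  have hWcard : ∀ i, ((Finset.range n).image (fun j => x (i + j))).card = n := by
    intro i
    rw [Finset.card_image_of_injOn, Finset.card_range]
    intro a ha b hb h
    exact hwin i a b (Finset.mem_range.1 ha) (Finset.mem_range.1 hb) h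
  have hWfacet : ∀ i, IsFacet n faces ((Finset.range n).image (fun j => x (i + j))) :=
    fun i => ⟨(hWF i) ▸ hfaces i, hWcard i⟩
  have hWsub : ∀ i, ((Finset.range n).image (fun j => x (i + j))) ⊆ S := by
    intro i v hv
    obtain ⟨j, _, rfl⟩ := Finset.mem_image.1 hv
    exact hmemS _
  -- the window starting at m+1 is the complement of x m
  have hcompl : ∀ m, m < n + 1 →
      ((Finset.range n).image (fun j => x (m + 1 + j))) = S \ {x m} := by
    intro m hm
    have hxmS : x m ∈ S := hmemS m
    have hsub : ((Finset.range n).image (fun j => x (m + 1 + j))) ⊆ S \ {x m} := by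
      intro v hv
      obtain ⟨j, hj, rfl⟩ := Finset.mem_image.1 hv
      rw [Finset.mem_range] at hj
      rw [Finset.mem_sdiff]
      refine ⟨hmemS _, ?_⟩
      rw [Finset.mem_singleton]
      intro h
      have h2 : x (m + (1 + j)) = x (m + 0) := by
        rw [show m + (1+j) = m + 1 + j by omega, h, Nat.add_zero]
      have h3 : (m + (1+j)) % (n+1) = (m + 0) % (n+1) := by
        have c1 := hmod (m + (1+j))
        have c2 := hmod (m + 0)
        rw [c1, c2] at h2
        exact hinj _ _ (Nat.mod_lt _ (by omega)) (Nat.mod_lt _ (by omega)) h2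
      have := addmod_cancel (n := n+1) h3 (by omega) (by omega)
      omega
    have hc1 : (S \ {x m}).card = n := by
      rw [Finset.card_sdiff_of_subset (Finset.singleton_subset_iff.2 hxmS), hScard,
        Finset.card_singleton]
      omega
    exact Finset.eq_of_subset_of_card_le hsub (by rw [hc1, hWcard])
  -- every n-subset of S is a facet
  have hsub_facet : ∀ X : Finset V, X ⊆ S → X.card = n → IsFacet n faces X := by
    intro X hXS hXc
    have hc1 : (S \ X).card = 1 := by
      rw [Finset.card_sdiff_of_subset hXS, hScard, hXc]; omega
    obtain ⟨s, hs⟩ := Finset.card_eq_one.1 hc1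
    have hsS : s ∈ S \ X := hs ▸ Finset.mem_singleton_self s
    rw [Finset.mem_sdiff] at hsS
    obtain ⟨m, hm, hms⟩ := Finset.mem_image.1 hsS.1
    rw [Finset.mem_range] at hm
    have hXeq : X = S \ {s} := by
      refine Finset.eq_of_subset_of_card_le ?_ ?_
      · intro v hv
        rw [Finset.mem_sdiff, Finset.mem_singleton]
        exact ⟨hXS hv, fun h => hsS.2 (h ▸ hv)⟩
      · rw [Finset.card_sdiff_of_subset (Finset.singleton_subset_iff.2 hsS.1), hScard,
          Finset.card_singleton, hXc]
        omega
    rw [hXeq, ← hms, ← hcompl m hm]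
    exact hWfacet (m+1)
  -- adjacency preserves being inside S
  have hadjS : ∀ C D : Finset V, C ⊆ S → FacetAdj n faces C D → D ⊆ S := by
    rintro C D hCS ⟨hC, hD, hne, hcardR⟩
    set R := C ∩ D with hRdef
    have hfR : faces R := hΔ.2.1 hC.1 Finset.inter_subset_left
    have h2 := hΔ.2.2.2.2 hfR hcardR
    have hRS : R ⊆ S := Finset.inter_subset_left.trans hCS
    have hcardSR : (S \ R).card = 2 := by
      rw [Finset.card_sdiff_of_subset hRS, hScard, hcardR]; omega
    obtain ⟨a, b, hab, hSR⟩ := Finset.card_eq_two.1 hcardSR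
    have haSR : a ∈ S \ R := by rw [hSR]; exact Finset.mem_insert_self a {b}
    have hbSR : b ∈ S \ R := by rw [hSR]; exact Finset.mem_insert_of_mem (Finset.mem_singleton_self b)
    rw [Finset.mem_sdiff] at haSR hbSR
    have hA : IsFacet n faces (insert a R) :=
      hsub_facet _ (Finset.insert_subset haSR.1 hRS)
        (by rw [Finset.card_insert_of_notMem haSR.2, hcardR]; omega)
    have hB : IsFacet n faces (insert b R) :=
      hsub_facet _ (Finset.insert_subset hbSR.1 hRS)
        (by rw [Finset.card_insert_of_notMem hbSR.2, hcardR]; omega)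
    have hABne : insert a R ≠ insert b R := by
      intro h
      have : a ∈ insert b R := h ▸ Finset.mem_insert_self a R
      rcases Finset.mem_insert.1 this with h' | h'
      · exact hab h'
      · exact haSR.2 h'
    have hset := pair_of_ncard_two h2
      ⟨hA, Finset.subset_insert a R⟩ ⟨hB, Finset.subset_insert b R⟩ hABne
    have hDmem : D ∈ {C' : Finset V | IsFacet n faces C' ∧ R ⊆ C'} :=
      ⟨hD, Finset.inter_subset_right⟩
    rw [hset] at hDmem
    simp only [Set.mem_insert_iff, Set.mem_singleton_iff] at hDmem
    rcases hDmem with h' | h' <;> rw [h']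
    · exact Finset.insert_subset haSR.1 hRS
    · exact Finset.insert_subset hbSR.1 hRS
  -- paths stay inside S
  have hpathS : ∀ m (p : ℕ → Finset V), IsFacetPath n faces m p → p 0 ⊆ S → p m ⊆ S := by
    intro m
    induction m with
    | zero => exact fun p _ h0 => h0
    | succ k ih =>
      intro p hp h0
      exact hadjS _ _ (ih p (fun i hi => hp i (by omega)) h0) (hp k (by omega))
  -- every vertex is in S
  have hSuniv : S = Finset.univ := by
    refine Finset.eq_univ_iff_forall.2 fun v => ?_
    obtain ⟨D, hD, hvD⟩ := hΔ.2.2.2.1 (hΔ.1 v)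
    have hC0 : IsFacet n faces (F 0).toFinset := by
      rw [hWF 0]; exact hWfacet 0
    obtain ⟨m, p, hp0, hpm, hp⟩ := hconn _ _ hC0 hD
    have hDS : D ⊆ S := by
      rw [← hpm]
      exact hpathS m p hp (by rw [hp0, hWF 0]; exact hWsub 0)
    exact hDS (hvD (Finset.mem_singleton_self v))
  constructor
  · rw [← Finset.card_univ, ← hSuniv, hScard]
  · intro X hX
    exact hsub_facet X (by rw [hSuniv]; exact Finset.subset_univ X) hX

end Forward

/-- A thin chamber complex of rank `n` contains a zigzag of length `n + 1` iff it
is the `n`-simplex: its vertex set has `n + 1` elements and every `n`-element subset of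
vertices is a facet. -/
theorem stmt9 [Fintype V] (n : ℕ) (faces : Finset V → Prop) (hΔ : IsThinComplex n faces)
    (hconn : ChamberConnected n faces) :
    (∃ F : ℕ → List V, IsZigzag n faces (n + 1) F) ↔
      Fintype.card V = n + 1 ∧ ∀ X : Finset V, X.card = n → IsFacet n faces X := by
  rcases Nat.eq_zero_or_pos n with rfl | hn
  · constructor
    · rintro ⟨F, -, hstep, -, -⟩
      exfalso
      obtain ⟨⟨l0, -, -⟩, ⟨l1, -, -⟩, y, hy, -⟩ := hstep 0
      have hF0 : F 0 = [] := List.length_eq_zero_iff.1 l0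
      rw [hF0] at hy
      simp only [List.tail_nil, List.nil_append] at hy
      rw [hy] at l1
      simp at l1
    · rintro ⟨-, hfac⟩
      exfalso
      have hfacet := hfac ∅ Finset.card_empty
      have h2 := hΔ.2.2.2.2 hfacet.1 (by simp)
      have hone : {C : Finset V | IsFacet 0 faces C ∧ ∅ ⊆ C} = {∅} := by
        ext C
        simp only [Set.mem_setOf_eq, Set.mem_singleton_iff]
        constructor
        · rintro ⟨⟨-, hc⟩, -⟩
          exact Finset.card_eq_zero.1 hc
        · rintro rfl
          exact ⟨hfacet, subset_rfl⟩
      rw [hone] at h2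
      simp at h2
  · constructor
    · rintro ⟨F, hz⟩
      exact zigzag_simplex n hn faces hΔ hconn F hz
    · rintro ⟨hcard, hfac⟩
      exact simplex_zigzag n hn faces hcard hfac
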